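/- For the football parameters (u,v,w) = (5,3,5), the Coxeter–Schläfli matrix M(5,3,5) is invertible and all four diagonal entries of its inverse are negative. (Geometrically: all four vertices A₀, A₁, A₂, A₃ of the football orthoscheme are proper points of hyperbolic space, so no truncation is needed.) -/

import Mathlib

open Real Matrix

/-- The Coxeter–Schläfli matrix `M(u,v,w)`. -/
noncomputable def coxeterSchlafli (u v w : ℕ) : Matrix (Fin 4) (Fin 4) ℝ :=
  !![1, -Real.cos (π / u), 0, 0;
     -Real.cos (π / u), 1, -Real.cos (π / v), 0;
     0, -Real.cos (π / v), 1, -Real.cos (π / w);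
     0, 0, -Real.cos (π / w), 1]

theorem football_inv_diag_neg :
    IsUnit (coxeterSchlafli 5 3 5).det ∧
    ∀ i : Fin 4, (coxeterSchlafli 5 3 5)⁻¹ i i < 0 := by
  have hs5 : Real.sqrt 5 ^ 2 = 5 := Real.sq_sqrt (by norm_num)
  have hs0 : (0:ℝ) ≤ Real.sqrt 5 := Real.sqrt_nonneg 5
  have hs2 : 2 < Real.sqrt 5 := by nlinarith
  have hs3 : Real.sqrt 5 < 3 := by nlinarith
  set s := Real.sqrt 5 with hsdef
  have hM : coxeterSchlafli 5 3 5 =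
      !![1, -((1+s)/4), 0, 0;
         -((1+s)/4), 1, -(1/2:ℝ), 0;
         0, -(1/2:ℝ), 1, -((1+s)/4);
         0, 0, -((1+s)/4), 1] := by
    ext i j
    fin_cases i <;> fin_cases j <;>
      simp [coxeterSchlafli] <;> norm_num <;> exact hsdef.symm
  have hd : (coxeterSchlafli 5 3 5).det = (7 - 5*s)/32 := by
    rw [hM]
    simp [Matrix.det_succ_row_zero, Fin.sum_univ_succ, Fin.succAbove]
    linear_combination ((s^2 + 4*s - 21)/256) * hs5
  have hdneg : ((7 - 5*s)/32 : ℝ) < 0 := by nlinarith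
  have hdne : ((7 - 5*s)/32 : ℝ) ≠ 0 := ne_of_lt hdneg
  set a : Matrix (Fin 4) (Fin 4) ℝ :=
    !![(3-s)/8, s/8, (1+s)/8, (3+s)/16;
       s/8, (5-s)/8, 1/2, (1+s)/8;
       (1+s)/8, 1/2, (5-s)/8, s/8;
       (3+s)/16, (1+s)/8, s/8, (3-s)/8] with ha
  have hmul : coxeterSchlafli 5 3 5 * a = ((7-5*s)/32) • (1 : Matrix (Fin 4) (Fin 4) ℝ) := by
    rw [hM, ha]
    ext i j
    fin_cases i <;> fin_cases j <;>
      simp [Matrix.mul_apply, Fin.sum_univ_four, Matrix.one_apply] <;>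
      first
        | linear_combination (0:ℝ) * hs5
        | linear_combination ((-1:ℝ)/32) * hs5
        | linear_combination ((1:ℝ)/32) * hs5
        | linear_combination ((-1:ℝ)/64) * hs5
        | linear_combination ((1:ℝ)/64) * hs5
  have hright : coxeterSchlafli 5 3 5 * (((7-5*s)/32)⁻¹ • a) = 1 := by
    rw [Matrix.mul_smul, hmul, smul_smul, inv_mul_cancel₀ hdne, one_smul]
  have hinv : (coxeterSchlafli 5 3 5)⁻¹ = ((7-5*s)/32)⁻¹ • a :=
    Matrix.inv_eq_right_inv hright
  have hdinv : (((7-5*s)/32)⁻¹ : ℝ) < 0 := inv_lt_zero.mpr hdneg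
  refine ⟨by rw [hd]; exact isUnit_iff_ne_zero.mpr hdne, ?_⟩
  intro i
  rw [hinv]
  have hdinv' : (32:ℝ) / (7 - 5*s) < 0 := div_neg_of_pos_of_neg (by norm_num) (by nlinarith)
  have h0 : (0:ℝ) < (3-s)/8 := by linarith
  have h1 : (0:ℝ) < (5-s)/8 := by linarith
  fin_cases i <;> simp only [Matrix.smul_apply, smul_eq_mul, ha] <;> norm_num <;>
    exact mul_neg_of_neg_of_pos hdinv' (by linarith)
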